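/- Squares of the three-fermion disentangler are symmetric circuits: if U_dis = Σ_z Π_z ⊗ U^mat_z with U^mat_z = U^mat_{-z}, and (U^mat_z)² is a circuit C_z of range O(1) that admits a decomposition C_z = C⁽⁰⁾_z C⁽¹⁾_z C⁽²⁾_z C⁽³⁾_z into four rounds of nonoverlapping gates, each gate supported on a single k-cell and determined only by the spins in the open star of that cell (hence invariant under z ↦ −z), then U_dis² = Σ_z Π_z ⊗ (U^mat_z)² is a quantum circuit of depth 4 all of whose gates commute with the global Z₂ symmetry X (product of Pauli X on spins). Combined with the fact that U ⊗ U† is a symmetric circuit for any symmetric U, it follows that U_dis ⊗ U_dis is a quantum circuit of Z₂-symmetric gates. -/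

import Mathlib

/-!
STATEMENT 19: squares of the three-fermion disentangler are symmetric circuits.  If
`U_dis = Σ_z Π_z ⊗ U^mat_z` with `U^mat_z = U^mat_{-z}`, and `(U^mat_z)²` admits a
decomposition into four rounds of nonoverlapping gates, each gate supported on a single
`k`-cell and determined only by the spins in the open star of that cell (hence invariant
under `z ↦ -z`), then `U_dis² = Σ_z Π_z ⊗ (U^mat_z)²` is a quantum circuit of depth 4 all
of whose gates commute with the global `Z₂` symmetry `X`.  Combined with the fact that
`U ⊗ U†` is a symmetric circuit for any symmetric `U` (taken as given), it follows that
`U_dis ⊗ U_dis` is a quantum circuit of `Z₂`-symmetric gates.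
-/
noncomputable section

open Matrix

/-- operators on a collection `K` of qubits -/
abbrev Op (K : Type*) [Fintype K] [DecidableEq K] : Type _ :=
  Matrix (K → Bool) (K → Bool) ℂ

/-- `O` is supported on the region `T` -/
def SupportedOn {K : Type*} [Fintype K] [DecidableEq K] (O : Op K) (T : Set K) : Prop :=
  (∀ a b : K → Bool, O a b ≠ 0 → ∀ k ∉ T, a k = b k) ∧
  (∀ a b a' b' : K → Bool, (∀ k ∈ T, a k = a' k) → (∀ k ∈ T, b k = b' k) →
    (∀ k ∉ T, a k = b k) → (∀ k ∉ T, a' k = b' k) → O a b = O a' b')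

/-- conjugation by the unitary `U` is a quantum cellular automaton of range `R`
with respect to the distance function `d` -/
def IsQCA {K : Type*} [Fintype K] [DecidableEq K] (d : K → K → ℝ) (U : Op K) (R : ℝ) : Prop :=
  U ∈ unitary (Op K) ∧
  ∀ k : K, ∀ O : Op K, SupportedOn O {k} →
    SupportedOn (star U * O * U) {k' : K | d k k' ≤ R}
/-- `W` is a single round of gates: a product of unitary gates on pairwise disjoint
regions of diameter at most `r`, each gate satisfying the predicate `P`. -/
def IsRound {K : Type*} [Fintype K] [DecidableEq K] (d : K → K → ℝ) (r : ℝ)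
    (P : Op K → Prop) (W : Op K) : Prop :=
  ∃ (n : ℕ) (T : Fin n → Set K) (g : Fin n → Op K),
    (∀ a b, a ≠ b → Disjoint (T a) (T b)) ∧
    (∀ a, SupportedOn (g a) (T a)) ∧
    (∀ a, ∀ x ∈ T a, ∀ y ∈ T a, d x y ≤ r) ∧
    (∀ a, g a ∈ unitary (Op K) ∧ P (g a)) ∧
    W = (List.ofFn g).prod

/-- `W` is a quantum circuit of depth `depth` whose gates have range at most `r`
and satisfy the predicate `P`. -/
def IsCircuit {K : Type*} [Fintype K] [DecidableEq K] (d : K → K → ℝ) (r : ℝ)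
    (depth : ℕ) (P : Op K → Prop) (W : Op K) : Prop :=
  ∃ rounds : Fin depth → Op K, (∀ k, IsRound d r P (rounds k)) ∧
    W = (List.ofFn rounds).prod
variable {S Mi : Type*} [Fintype S] [DecidableEq S] [Fintype Mi] [DecidableEq Mi]

/-- the controlled unitary `Σ_z Π^spin_z ⊗ V_z` on spins (`S`) and material (`Mi`) -/
def controlled (V : (S → Bool) → Op Mi) : Op (S ⊕ Mi) :=
  fun a b => if (fun s => a (Sum.inl s)) = (fun s => b (Sum.inl s))
    then V (fun s => a (Sum.inl s)) (fun m => a (Sum.inr m)) (fun m => b (Sum.inr m))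
    else 0

/-- the spin configuration `z + i`: flip spin `i` in `z` -/
def flipAt {S : Type*} [DecidableEq S] (z : S → Bool) (i : S) : S → Bool :=
  Function.update z i (!(z i))

open scoped Classical in
/-- the configuration `z_A`, agreeing with `z` on `A` and equal to `+1` (true) off `A` -/
def restrictTo {S : Type*} (A : Set S) (z : S → Bool) : S → Bool :=
  fun s => if s ∈ A then z s else true

/-- flip all the spin bits, leaving the material unchanged -/
def spinFlipConf {S Mi : Type*} (a : (S ⊕ Mi) → Bool) : (S ⊕ Mi) → Bool :=
  fun k => match k with
  | Sum.inl s => !(a (Sum.inl s))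
  | Sum.inr m => a (Sum.inr m)

/-- the global `Z₂` symmetry: the product of Pauli `X` over all spins -/
def Xspins {S Mi : Type*} [Fintype S] [DecidableEq S] [Fintype Mi] [DecidableEq Mi] :
    Op (S ⊕ Mi) :=
  fun a b => if b = spinFlipConf a then 1 else 0

/-- the metric on the doubled lattice -/
def ddist {K : Type*} (d : K → K → ℝ) : (K ⊕ K) → (K ⊕ K) → ℝ :=
  fun x y => d (Sum.elim id id x) (Sum.elim id id y)

/-- `A ⊗ B` on two copies of the lattice `K` -/
def tensK {K : Type*} [Fintype K] [DecidableEq K] (A B : Op K) : Op (K ⊕ K) :=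
  fun a b => A (fun i => a (Sum.inl i)) (fun i => b (Sum.inl i)) *
    B (fun i => a (Sum.inr i)) (fun i => b (Sum.inr i))


open scoped Classical

section Aux
variable {K K1 K2 : Type*} [Fintype K] [DecidableEq K]
  [Fintype K1] [DecidableEq K1] [Fintype K2] [DecidableEq K2]

lemma sum_sumArrow {M : Type*} [AddCommMonoid M] (F : ((K1 ⊕ K2) → Bool) → M) :
    ∑ c : (K1 ⊕ K2) → Bool, F c
      = ∑ p : (K1 → Bool) × (K2 → Bool), F (Sum.elim p.1 p.2) := by
  refine Fintype.sum_equiv (Equiv.sumArrowEquivProdArrow K1 K2 Bool).symm.symm F _ ?_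
  intro c
  congr 1
  funext k
  cases k <;> rfl

lemma fun_sum_ext_iff (a b : (K1 ⊕ K2) → Bool) :
    a = b ↔ ((fun s => a (Sum.inl s)) = fun s => b (Sum.inl s)) ∧
      ((fun m => a (Sum.inr m)) = fun m => b (Sum.inr m)) := by
  constructor
  · rintro rfl; exact ⟨rfl, rfl⟩
  · rintro ⟨h1, h2⟩
    funext k
    cases k with
    | inl s => exact congrFun h1 s
    | inr m => exact congrFun h2 m

lemma pi_list_prod_apply {ι : Type*} {M : Type*} [Monoid M] (l : List (ι → M)) (z : ι) :
    l.prod z = (l.map (fun f => f z)).prod := by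
  induction l with
  | nil => rfl
  | cons h t ih => simp [List.prod_cons, ih]


lemma tensK_mul (A B C D : Op K) :
    tensK A B * tensK C D = tensK (A * C) (B * D) := by
  funext a b
  show ∑ c, tensK A B a c * tensK C D c b = _
  rw [sum_sumArrow (fun c => tensK A B a c * tensK C D c b)]
  rw [Fintype.sum_prod_type]
  unfold tensK
  rw [Matrix.mul_apply, Matrix.mul_apply, Finset.sum_mul_sum]
  refine Finset.sum_congr rfl fun p1 _ => Finset.sum_congr rfl fun p2 _ => ?_
  simp only [Sum.elim_inl, Sum.elim_inr]
  ring

lemma tensK_one : tensK (1 : Op K) (1 : Op K) = 1 := by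
  funext a b
  unfold tensK
  rw [Matrix.one_apply, Matrix.one_apply, Matrix.one_apply]
  by_cases h : a = b
  · subst h; simp
  · rw [if_neg h]
    rw [fun_sum_ext_iff] at h
    rcases not_and_or.mp h with h' | h'
    · rw [if_neg h', zero_mul]
    · rw [if_neg h', mul_zero]

lemma star_tensK (A B : Op K) : star (tensK A B) = tensK (star A) (star B) := by
  funext a b
  simp [tensK, Matrix.star_apply, mul_comm]

/-- `tensK 1` as a monoid hom -/
def tensRHom : Op K →* Op (K ⊕ K) where
  toFun := fun B => tensK 1 B
  map_one' := tensK_one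
  map_mul' := fun A B => by rw [tensK_mul, one_mul]


end Aux

section Ctrl
variable {S Mi : Type*} [Fintype S] [DecidableEq S] [Fintype Mi] [DecidableEq Mi]

lemma controlled_one : controlled (fun _ : S → Bool => (1 : Op Mi)) = 1 := by
  funext a b
  unfold controlled
  by_cases h1 : (fun s => a (Sum.inl s)) = fun s => b (Sum.inl s)
  · rw [if_pos h1]
    show (1 : Op Mi) _ _ = (1 : Op (S ⊕ Mi)) a b
    rw [Matrix.one_apply, Matrix.one_apply]
    by_cases h2 : (fun m => a (Sum.inr m)) = fun m => b (Sum.inr m)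
    · rw [if_pos h2, if_pos ((fun_sum_ext_iff a b).mpr ⟨h1, h2⟩)]
    · rw [if_neg h2, if_neg (fun h => h2 (((fun_sum_ext_iff a b).mp h).2))]
  · rw [if_neg h1]
    rw [show (1 : Op (S ⊕ Mi)) a b = if a = b then 1 else 0 from Matrix.one_apply]
    rw [if_neg (fun h => h1 (((fun_sum_ext_iff a b).mp h).1))]

lemma controlled_mul (V W : (S → Bool) → Op Mi) :
    controlled V * controlled W = controlled (fun z => V z * W z) := by
  funext a b
  show ∑ c, controlled V a c * controlled W c b = _
  rw [sum_sumArrow (fun c => controlled V a c * controlled W c b)]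
  rw [Fintype.sum_prod_type]
  unfold controlled
  simp only [Sum.elim_inl, Sum.elim_inr]
  rw [Finset.sum_eq_single (fun s => a (Sum.inl s))]
  · by_cases h : (fun s => a (Sum.inl s)) = fun s => b (Sum.inl s)
    · rw [if_pos h]
      rw [Matrix.mul_apply]
      refine Finset.sum_congr rfl fun m _ => ?_
      simp [h]
    · rw [if_neg h]
      apply Finset.sum_eq_zero
      intro m _
      simp [h]
  · intro zs _ hzs
    apply Finset.sum_eq_zero
    intro m _
    simp [Ne.symm hzs]
  · intro h; exact absurd (Finset.mem_univ _) h


lemma star_controlled (V : (S → Bool) → Op Mi) :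
    star (controlled V) = controlled (fun z => star (V z)) := by
  funext a b
  rw [Matrix.star_apply]
  unfold controlled
  by_cases h : (fun s => b (Sum.inl s)) = fun s => a (Sum.inl s)
  · simp only [if_pos h, if_pos h.symm, Matrix.star_apply, h, if_true]
  · rw [if_neg h, if_neg (fun hh => h hh.symm), star_zero]

lemma controlled_mem_unitary (V : (S → Bool) → Op Mi) (h : ∀ z, V z ∈ unitary (Op Mi)) :
    controlled V ∈ unitary (Op (S ⊕ Mi)) := by
  rw [Unitary.mem_iff]
  constructor
  · rw [star_controlled, controlled_mul]
    rw [show (fun z => star (V z) * V z) = fun _ : S → Bool => (1 : Op Mi) from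
      funext fun z => (Unitary.mem_iff.mp (h z)).1]
    exact controlled_one
  · rw [star_controlled, controlled_mul]
    rw [show (fun z => V z * star (V z)) = fun _ : S → Bool => (1 : Op Mi) from
      funext fun z => (Unitary.mem_iff.mp (h z)).2]
    exact controlled_one

/-- `controlled` as a monoid hom from the pointwise monoid -/
def controlledHom : ((S → Bool) → Op Mi) →* Op (S ⊕ Mi) where
  toFun := controlled
  map_one' := controlled_one
  map_mul' := fun V W => (controlled_mul V W).symm

lemma spinFlipConf_invol (a : (S ⊕ Mi) → Bool) :
    spinFlipConf (spinFlipConf a) = a := by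
  funext k
  cases k <;> simp [spinFlipConf]

lemma mul_Xspins (g : Op (S ⊕ Mi)) (a b : (S ⊕ Mi) → Bool) :
    (g * (Xspins : Op (S ⊕ Mi))) a b = g a (spinFlipConf b) := by
  show ∑ c, g a c * Xspins c b = _
  rw [Finset.sum_eq_single (spinFlipConf b)]
  · rw [show Xspins (spinFlipConf b) b = 1 from if_pos (spinFlipConf_invol b).symm, mul_one]
  · intro c _ hc
    rw [show Xspins c b = 0 from if_neg (fun h => hc (by rw [h, spinFlipConf_invol])), mul_zero]
  · intro h; exact absurd (Finset.mem_univ _) h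

lemma Xspins_mul (g : Op (S ⊕ Mi)) (a b : (S ⊕ Mi) → Bool) :
    ((Xspins : Op (S ⊕ Mi)) * g) a b = g (spinFlipConf a) b := by
  show ∑ c, Xspins a c * g c b = _
  rw [Finset.sum_eq_single (spinFlipConf a)]
  · rw [show Xspins a (spinFlipConf a) = 1 from if_pos rfl, one_mul]
  · intro c _ hc
    rw [show Xspins a c = 0 from if_neg hc, zero_mul]
  · intro h; exact absurd (Finset.mem_univ _) h

lemma spinFlipConf_inl (a : (S ⊕ Mi) → Bool) (s : S) :
    spinFlipConf (Mi := Mi) a (Sum.inl s) = !(a (Sum.inl s)) := rfl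

lemma spinFlipConf_inr (a : (S ⊕ Mi) → Bool) (m : Mi) :
    spinFlipConf (S := S) a (Sum.inr m) = a (Sum.inr m) := rfl

lemma controlled_commute_Xspins (V : (S → Bool) → Op Mi)
    (h : ∀ z, V z = V (fun s => !(z s))) : Commute (controlled V) Xspins := by
  unfold Commute SemiconjBy
  funext a b
  rw [mul_Xspins, Xspins_mul]
  unfold controlled
  simp only [spinFlipConf_inl, spinFlipConf_inr]
  by_cases hc : (fun s => a (Sum.inl s)) = fun s => !(b (Sum.inl s))
  · have hc' : (fun s => !(a (Sum.inl s))) = fun s => b (Sum.inl s) := by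
      funext s; rw [congrFun hc s, Bool.not_not]
    exact (if_pos hc).trans ((congrFun (congrFun (h _) _) _).trans (if_pos hc').symm)
  · have hc' : ¬((fun s => !(a (Sum.inl s))) = fun s => b (Sum.inl s)) := by
      intro hh
      apply hc
      funext s
      rw [← congrFun hh s, Bool.not_not]
    exact (if_neg hc).trans (if_neg hc').symm


lemma mem_inl_region {star' : Set S} {reg' : Set Mi} {s : S} (hs : s ∈ star') :
    (Sum.inl s : S ⊕ Mi) ∈ (Sum.inl '' star' ∪ Sum.inr '' reg' : Set (S ⊕ Mi)) :=
  Or.inl ⟨s, hs, rfl⟩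

lemma mem_inr_region {star' : Set S} {reg' : Set Mi} {m : Mi} (hm : m ∈ reg') :
    (Sum.inr m : S ⊕ Mi) ∈ (Sum.inl '' star' ∪ Sum.inr '' reg' : Set (S ⊕ Mi)) :=
  Or.inr ⟨m, hm, rfl⟩

lemma not_mem_inl_region {star' : Set S} {reg' : Set Mi} {s : S} (hs : s ∉ star') :
    (Sum.inl s : S ⊕ Mi) ∉ (Sum.inl '' star' ∪ Sum.inr '' reg' : Set (S ⊕ Mi)) := by
  rintro (⟨x, hx, hxe⟩ | ⟨x, hx, hxe⟩)
  · cases hxe; exact hs hx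
  · simp at hxe

lemma not_mem_inr_region {star' : Set S} {reg' : Set Mi} {m : Mi} (hm : m ∉ reg') :
    (Sum.inr m : S ⊕ Mi) ∉ (Sum.inl '' star' ∪ Sum.inr '' reg' : Set (S ⊕ Mi)) := by
  rintro (⟨x, hx, hxe⟩ | ⟨x, hx, hxe⟩)
  · simp at hxe
  · cases hxe; exact hm hx

lemma supportedOn_controlled_gate (star' : Set S) (reg' : Set Mi)
    (Vg : (S → Bool) → Op Mi)
    (hdep : ∀ z z', (∀ s ∈ star', z s = z' s) → Vg z = Vg z')
    (hsupp : ∀ z, SupportedOn (Vg z) reg') :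
    SupportedOn (controlled Vg)
      ((Sum.inl '' star' ∪ Sum.inr '' reg' : Set (S ⊕ Mi))) := by
  constructor
  · intro a b hne k hk
    unfold controlled at hne
    by_cases hc : (fun s => a (Sum.inl s)) = fun s => b (Sum.inl s)
    · cases k with
      | inl s => exact congrFun hc s
      | inr m =>
        have hm : m ∉ reg' := fun hm => hk (mem_inr_region hm)
        rw [if_pos hc] at hne
        exact (hsupp _).1 _ _ hne m hm
    · rw [if_neg hc] at hne; exact absurd rfl hne
  · intro a b a' b' ha hb hab ha'b'
    unfold controlled
    have key : ∀ s, (a (Sum.inl s) = b (Sum.inl s)) ↔ (a' (Sum.inl s) = b' (Sum.inl s)) := by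
      intro s
      by_cases hs : s ∈ star'
      · rw [ha _ (mem_inl_region hs), hb _ (mem_inl_region hs)]
      · rw [hab _ (not_mem_inl_region hs), ha'b' _ (not_mem_inl_region hs)]
        simp
    by_cases hc : (fun s => a (Sum.inl s)) = fun s => b (Sum.inl s)
    · have hc' : (fun s => a' (Sum.inl s)) = fun s => b' (Sum.inl s) :=
        funext fun s => (key s).mp (congrFun hc s)
      rw [if_pos hc, if_pos hc']
      rw [hdep (fun s => a (Sum.inl s)) (fun s => a' (Sum.inl s))
        (fun s hs => ha _ (mem_inl_region hs))]
      exact (hsupp _).2 _ _ _ _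
        (fun m hm => ha _ (mem_inr_region hm))
        (fun m hm => hb _ (mem_inr_region hm))
        (fun m hm => hab _ (not_mem_inr_region hm))
        (fun m hm => ha'b' _ (not_mem_inr_region hm))
    · have hc' : ¬((fun s => a' (Sum.inl s)) = fun s => b' (Sum.inl s)) := fun hh =>
        hc (funext fun s => (key s).mpr (congrFun hh s))
      rw [if_neg hc, if_neg hc']

end Ctrl

section Circ
variable {K : Type*} [Fintype K] [DecidableEq K]

lemma IsRound.mono_r {d : K → K → ℝ} {r r' : ℝ} {P : Op K → Prop} {W : Op K}
    (h : IsRound d r P W) (hr : r ≤ r') : IsRound d r' P W := by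
  obtain ⟨n, T, g, h1, h2, h3, h4, h5⟩ := h
  exact ⟨n, T, g, h1, h2, fun a x hx y hy => (h3 a x hx y hy).trans hr, h4, h5⟩

lemma IsCircuit.mono_r {d : K → K → ℝ} {r r' : ℝ} {n : ℕ} {P : Op K → Prop} {W : Op K}
    (h : IsCircuit d r n P W) (hr : r ≤ r') : IsCircuit d r' n P W := by
  obtain ⟨R, hR, h2⟩ := h
  exact ⟨R, fun k => (hR k).mono_r hr, h2⟩

lemma IsCircuit.mul {d : K → K → ℝ} {r : ℝ} {n1 n2 : ℕ} {P : Op K → Prop} {W1 W2 : Op K}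
    (h1 : IsCircuit d r n1 P W1) (h2 : IsCircuit d r n2 P W2) :
    IsCircuit d r (n1 + n2) P (W1 * W2) := by
  obtain ⟨R1, hR1, rfl⟩ := h1
  obtain ⟨R2, hR2, rfl⟩ := h2
  refine ⟨Fin.addCases R1 R2, ?_, ?_⟩
  · intro k
    refine Fin.addCases (fun i => ?_) (fun i => ?_) k
    · show IsRound d r P (Fin.addCases R1 R2 (Fin.castAdd n2 i))
      rw [Fin.addCases_left]; exact hR1 i
    · show IsRound d r P (Fin.addCases R1 R2 (Fin.natAdd n1 i))
      rw [Fin.addCases_right]; exact hR2 i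
  · rw [List.ofFn_add, List.prod_append]
    congr 1
    · refine congrArg List.prod (congrArg List.ofFn (funext fun i => ?_))
      exact (Fin.addCases_left (motive := fun _ => Op K) i).symm
    · refine congrArg List.prod (congrArg List.ofFn (funext fun i => ?_))
      rw [Fin.addCases_right]


lemma tensK_apply (A B : Op K) (a b : (K ⊕ K) → Bool) :
    tensK A B a b = A (fun i => a (Sum.inl i)) (fun i => b (Sum.inl i)) *
      B (fun i => a (Sum.inr i)) (fun i => b (Sum.inr i)) := rfl

lemma lift_round {d : K → K → ℝ} {r : ℝ} {X : Op K} {W : Op K}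
    (h : IsRound d r (fun g => Commute g X) W) :
    IsRound (ddist d) r (fun g => Commute g (tensK X X)) (tensK 1 W) := by
  obtain ⟨n, T, g, hdj, hsupp, hsize, hgood, rfl⟩ := h
  refine ⟨n, fun a => Sum.inr '' T a, fun a => tensK 1 (g a), ?_, ?_, ?_, ?_, ?_⟩
  · intro a b hab
    exact (Set.disjoint_image_iff Sum.inr_injective).mpr (hdj a b hab)
  · intro a
    constructor
    · intro x y hne k hk
      change tensK 1 (g a) x y ≠ 0 at hne
      rw [tensK_apply] at hne
      have h1 : (fun i => x (Sum.inl i)) = fun i => y (Sum.inl i) := by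
        by_contra hc
        rw [Matrix.one_apply_ne hc, zero_mul] at hne
        exact hne rfl
      have h2 : g a (fun i => x (Sum.inr i)) (fun i => y (Sum.inr i)) ≠ 0 :=
        fun hz => hne (by rw [hz, mul_zero])
      cases k with
      | inl i => exact congrFun h1 i
      | inr i =>
        have hi : i ∉ T a := fun hi => hk ⟨i, hi, rfl⟩
        exact (hsupp a).1 _ _ h2 i hi
    · intro x y x' y' hx hy hxy hx'y'
      show tensK 1 (g a) x y = tensK 1 (g a) x' y'
      rw [tensK_apply, tensK_apply]
      have hnl : ∀ i : K, (Sum.inl i : K ⊕ K) ∉ (Sum.inr '' T a : Set (K ⊕ K)) := by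
        rintro i ⟨w, hw, hwe⟩; simp at hwe
      have h1 : (fun i => x (Sum.inl i)) = fun i => y (Sum.inl i) :=
        funext fun i => hxy _ (hnl i)
      have h1' : (fun i => x' (Sum.inl i)) = fun i => y' (Sum.inl i) :=
        funext fun i => hx'y' _ (hnl i)
      rw [h1, h1', Matrix.one_apply_eq, Matrix.one_apply_eq]
      congr 1
      refine (hsupp a).2 _ _ _ _ ?_ ?_ ?_ ?_
      · exact fun m hm => hx _ ⟨m, hm, rfl⟩
      · exact fun m hm => hy _ ⟨m, hm, rfl⟩
      · exact fun m hm => hxy _ (fun hc => hm (by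
          obtain ⟨w, hw, hwe⟩ := hc
          cases hwe; exact hw))
      · exact fun m hm => hx'y' _ (fun hc => hm (by
          obtain ⟨w, hw, hwe⟩ := hc
          cases hwe; exact hw))
  · rintro a x ⟨x0, hx0, rfl⟩ y ⟨y0, hy0, rfl⟩
    exact hsize a x0 hx0 y0 hy0
  · intro a
    have hu := Unitary.mem_iff.mp (hgood a).1
    constructor
    · rw [Unitary.mem_iff]
      constructor
      · rw [star_tensK, tensK_mul, star_one, one_mul, hu.1, tensK_one]
      · rw [star_tensK, tensK_mul, star_one, one_mul, hu.2, tensK_one]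
    · show tensK 1 (g a) * tensK X X = tensK X X * tensK 1 (g a)
      rw [tensK_mul, tensK_mul, one_mul, mul_one, (hgood a).2.eq]
  · have := map_list_prod (tensRHom (K := K)) (List.ofFn g)
    rw [List.map_ofFn] at this
    exact this

lemma lift_circuit {d : K → K → ℝ} {r : ℝ} {n : ℕ} {X : Op K} {W : Op K}
    (h : IsCircuit d r n (fun g => Commute g X) W) :
    IsCircuit (ddist d) r n (fun g => Commute g (tensK X X)) (tensK 1 W) := by
  obtain ⟨R, hR, rfl⟩ := h
  refine ⟨fun k => tensK 1 (R k), fun k => lift_round (hR k), ?_⟩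
  have := map_list_prod (tensRHom (K := K)) (List.ofFn R)
  rw [List.map_ofFn] at this
  exact this

end Circ

theorem stmt_19
    {Cell : Fin 4 → Type} [∀ k, Fintype (Cell k)] [∀ k, DecidableEq (Cell k)]
    (d : (S ⊕ Mi) → (S ⊕ Mi) → ℝ) (r : ℝ)
    (Umat : (S → Bool) → Op Mi)
    (hunit : ∀ z, Umat z ∈ unitary (Op Mi))
    (hUsym : ∀ z, Umat z = Umat (fun s => !(z s)))
    (reg : ∀ k, Cell k → Set Mi) (starSp : ∀ k, Cell k → Set S)
    (G : ∀ k, Cell k → (S → Bool) → Op Mi)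
    -- each gate depends only on the spins in the open star of its cell …
    (hdep : ∀ k c (z z' : S → Bool), (∀ s ∈ starSp k c, z s = z' s) → G k c z = G k c z')
    -- … is invariant under flipping all spins …
    (hGsym : ∀ k c (z : S → Bool), G k c z = G k c (fun s => !(z s)))
    -- … is a unitary supported on its cell …
    (hGsupp : ∀ k c (z : S → Bool), SupportedOn (G k c z) (reg k c))
    (hGunit : ∀ k c (z : S → Bool), G k c z ∈ unitary (Op Mi))
    -- … the gates of one round are nonoverlapping …
    (hdisj : ∀ k, ∀ c c' : Cell k, c ≠ c' →
      Disjoint ((Sum.inl '' starSp k c ∪ Sum.inr '' reg k c : Set (S ⊕ Mi)))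
               ((Sum.inl '' starSp k c' ∪ Sum.inr '' reg k c' : Set (S ⊕ Mi))))
    -- … and have range at most r
    (hsize : ∀ k c, ∀ x ∈ (Sum.inl '' starSp k c ∪ Sum.inr '' reg k c : Set (S ⊕ Mi)),
      ∀ y ∈ (Sum.inl '' starSp k c ∪ Sum.inr '' reg k c : Set (S ⊕ Mi)), d x y ≤ r)
    -- the decomposition (U^mat_z)² = C⁽⁰⁾_z C⁽¹⁾_z C⁽²⁾_z C⁽³⁾_z into four rounds
    (hdecomp : ∀ z, Umat z * Umat z =
      (List.ofFn (fun k : Fin 4 =>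
        ((Finset.univ : Finset (Cell k)).toList.map (fun c => G k c z)).prod)).prod)
    -- the symmetric-circuit decomposition of U ⊗ U† via conjugated SWAPs, taken as given
    (hdouble : ∃ (r2 : ℝ) (dep2 : ℕ),
      IsCircuit (ddist d) r2 dep2 (fun g => Commute g (tensK Xspins Xspins))
        (tensK (controlled Umat) (star (controlled Umat)))) :
    -- U_dis² is a depth-4 circuit of gates commuting with the Z₂ symmetry X …
    IsCircuit d r 4 (fun g => Commute g Xspins) (controlled Umat * controlled Umat) ∧
    -- … and hence U_dis ⊗ U_dis is a quantum circuit of Z₂-symmetric gates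
    (∃ (r2 : ℝ) (dep2 : ℕ),
      IsCircuit (ddist d) r2 dep2 (fun g => Commute g (tensK Xspins Xspins))
        (tensK (controlled Umat) (controlled Umat))) := by
  classical
  have hsq : IsCircuit d r 4 (fun g => Commute g Xspins)
      (controlled Umat * controlled Umat) := by
    refine ⟨fun k => ((Finset.univ : Finset (Cell k)).toList.map
      (fun c => controlled (G k c))).prod, ?_, ?_⟩
    · intro k
      refine ⟨(Finset.univ : Finset (Cell k)).toList.length,
        fun a => Sum.inl '' starSp k ((Finset.univ : Finset (Cell k)).toList.get a) ∪
          Sum.inr '' reg k ((Finset.univ : Finset (Cell k)).toList.get a),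
        fun a => controlled (G k ((Finset.univ : Finset (Cell k)).toList.get a)),
        ?_, ?_, ?_, ?_, ?_⟩
      · intro a b hab
        exact hdisj k _ _
          (fun h => hab (((Finset.nodup_toList _).get_inj_iff).mp h))
      · intro a
        exact supportedOn_controlled_gate _ _ _
          (fun z z' hzz => hdep k _ z z' hzz) (fun z => hGsupp k _ z)
      · intro a x hx y hy
        exact hsize k _ x hx y hy
      · intro a
        exact ⟨controlled_mem_unitary _ (hGunit k _),
          controlled_commute_Xspins _ (hGsym k _)⟩
      · beta_reduce
        conv_lhs => rw [← List.ofFn_get (Finset.univ : Finset (Cell k)).toList,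
          List.map_ofFn]
        rfl
    · show controlledHom Umat * controlledHom Umat = _
      have hQ : Umat * Umat = (List.ofFn (fun k : Fin 4 =>
          ((Finset.univ : Finset (Cell k)).toList.map (fun c => G k c)).prod)).prod := by
        funext z
        rw [Pi.mul_apply, hdecomp z, pi_list_prod_apply, List.map_ofFn]
        refine congrArg List.prod (congrArg List.ofFn (funext fun k => ?_))
        show ((Finset.univ : Finset (Cell k)).toList.map (fun c => G k c z)).prod =
          (((Finset.univ : Finset (Cell k)).toList.map (fun c => G k c)).prod) z
        rw [pi_list_prod_apply, List.map_map]
        rfl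
      rw [← _root_.map_mul, hQ, map_list_prod, List.map_ofFn]
      refine congrArg List.prod (congrArg List.ofFn (funext fun k => ?_))
      show controlledHom (((Finset.univ : Finset (Cell k)).toList.map
        (fun c => G k c)).prod) = _
      rw [map_list_prod, List.map_map]
      rfl
  refine ⟨hsq, ?_⟩
  obtain ⟨r2, dep2, hC⟩ := hdouble
  refine ⟨max r2 r, dep2 + 4, ?_⟩
  have hlift := lift_circuit hsq
  have hmul := (hC.mono_r (le_max_left r2 r)).mul (hlift.mono_r (le_max_right r2 r))
  have hU : star (controlled Umat) * controlled Umat = 1 :=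
    (Unitary.mem_iff.mp (controlled_mem_unitary Umat hunit)).1
  have hkey : tensK (controlled Umat) (star (controlled Umat)) *
      tensK 1 (controlled Umat * controlled Umat) =
      tensK (controlled Umat) (controlled Umat) := by
    rw [tensK_mul, mul_one, ← mul_assoc, hU, one_mul]
  rw [← hkey]
  exact hmul

end
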